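/- Let D ≥ 3 be an integer and set T(w) = (1 − √(1 − 4w))/(2w) for 0 < w ≤ 1/4. Then the limit as z tends to (4D)^{-1} from below of (1 − 4Dz) · T(Dz)^5 · (D(D−1)·z²·T(Dz)²/((1 − D·z·T(Dz)²)(1 − z·T(Dz)²)))² exists and equals 1/2. -/

import Mathlib

open Filter

/-- Closed form of the plane-tree generating function. -/
noncomputable def Tgf (w : ℝ) : ℝ := (1 - Real.sqrt (1 - 4 * w)) / (2 * w)

lemma tgf_facts (w : ℝ) (hw : 0 < w) (hw2 : w < 1/4) :
    w * Tgf w ^ 2 = Tgf w - 1 ∧ Real.sqrt (1 - 4*w) * Tgf w = 2 - Tgf w ∧ 0 < Tgf w := by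
  set s := Real.sqrt (1 - 4*w) with hs
  have h4 : (0:ℝ) < 1 - 4*w := by linarith
  have hs2 : s ^ 2 = 1 - 4*w := Real.sq_sqrt h4.le
  have hs0 : 0 < s := Real.sqrt_pos.mpr h4
  have hs1 : s < 1 := by nlinarith [hs2, hs0]
  have ht : Tgf w = (1 - s)/(2*w) := rfl
  refine ⟨?_, ?_, ?_⟩
  · rw [ht]; field_simp; nlinarith [hs2]
  · rw [ht]; field_simp; nlinarith [hs2]
  · rw [ht]; exact div_pos (by linarith) (by linarith)

lemma ident (D : ℕ) (hD : 3 ≤ D) (z : ℝ) (hz : 0 < z) (hz2 : z < 1 / (4 * (D:ℝ))) :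
    (1 - 4 * (D : ℝ) * z) * (Tgf ((D : ℝ) * z)) ^ 5 *
          ((D : ℝ) * ((D : ℝ) - 1) * z ^ 2 * (Tgf ((D : ℝ) * z)) ^ 2 /
            ((1 - (D : ℝ) * z * (Tgf ((D : ℝ) * z)) ^ 2) *
              (1 - z * (Tgf ((D : ℝ) * z)) ^ 2))) ^ 2
    = ((D:ℝ) - 1)^2 * ((D:ℝ)*z)^4 * (Tgf ((D:ℝ)*z))^7 / ((D:ℝ) + 1 - Tgf ((D:ℝ)*z))^2 := by
  have hD3 : (3:ℝ) ≤ (D:ℝ) := by exact_mod_cast hD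
  have hDpos : (0:ℝ) < (D:ℝ) := by linarith
  set w := (D:ℝ) * z with hw_def
  have hw : 0 < w := by positivity
  have hw2 : w < 1/4 := by
    rw [hw_def]
    calc (D:ℝ) * z < (D:ℝ) * (1/(4*(D:ℝ))) := by
          exact mul_lt_mul_of_pos_left hz2 hDpos
      _ = 1/4 := by field_simp
  obtain ⟨h1, h2, h3⟩ := tgf_facts w hw hw2
  set t := Tgf w with ht_def
  set s := Real.sqrt (1 - 4*w) with hs_def
  have h4 : (0:ℝ) < 1 - 4*w := by linarith
  have hs0 : 0 < s := Real.sqrt_pos.mpr h4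
  have hs2 : s ^ 2 = 1 - 4*w := Real.sq_sqrt h4.le
  have ht2 : t < 2 := by nlinarith [h2, hs0, h3]
  have e0 : 1 - 4 * (D:ℝ) * z = s^2 := by rw [hs2, hw_def]; ring
  have e1 : 1 - (D:ℝ) * z * t^2 = s * t := by
    rw [← hw_def]; linarith [h1, h2]
  have e2 : 1 - z * t^2 = ((D:ℝ) + 1 - t) / (D:ℝ) := by
    rw [eq_div_iff (ne_of_gt hDpos)]
    linear_combination (-1 : ℝ) * h1 + t^2 * hw_def
  rw [e0, e1, e2]
  have hs0' : s ≠ 0 := ne_of_gt hs0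
  have ht0' : t ≠ 0 := ne_of_gt h3
  have hden : (D:ℝ) + 1 - t ≠ 0 := by linarith
  field_simp
  ring

/-- The one-loop reduced graph with multicolored self-loop and multicolored bridge:
as `z → (4D)⁻¹` from below,
`(1-4Dz)·T(Dz)⁵·(D(D-1)z²T²/((1-DzT²)(1-zT²)))² → 1/2`. -/
theorem one_loop_multicolored_tadpole_critical (D : ℕ) (hD : 3 ≤ D) :
    Tendsto
      (fun z : ℝ =>
        (1 - 4 * (D : ℝ) * z) * (Tgf ((D : ℝ) * z)) ^ 5 *
          ((D : ℝ) * ((D : ℝ) - 1) * z ^ 2 * (Tgf ((D : ℝ) * z)) ^ 2 /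
            ((1 - (D : ℝ) * z * (Tgf ((D : ℝ) * z)) ^ 2) *
              (1 - z * (Tgf ((D : ℝ) * z)) ^ 2))) ^ 2)
      (nhdsWithin (1 / (4 * (D : ℝ))) (Set.Iio (1 / (4 * (D : ℝ)))))
      (nhds (1 / 2)) := by
  have hD3 : (3:ℝ) ≤ (D:ℝ) := by exact_mod_cast hD
  have hDpos : (0:ℝ) < (D:ℝ) := by linarith
  set c : ℝ := 1 / (4 * (D:ℝ)) with hc_def
  have hcpos : 0 < c := by positivity
  set g : ℝ → ℝ := fun z =>
    ((D:ℝ) - 1)^2 * ((D:ℝ)*z)^4 * (Tgf ((D:ℝ)*z))^7 / ((D:ℝ) + 1 - Tgf ((D:ℝ)*z))^2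
    with hg_def
  have hDc : (D:ℝ) * c = 1/4 := by rw [hc_def]; field_simp
  have hT14 : Tgf (1/4) = 2 := by unfold Tgf; norm_num
  -- continuity of Tgf at 1/4
  have hTcont : ContinuousAt Tgf (1/4) := by
    unfold Tgf
    exact ContinuousAt.div
      (continuousAt_const.sub ((Real.continuous_sqrt.continuousAt).comp (by fun_prop)))
      (by fun_prop) (by norm_num)
  have hgc : g c = 1/2 := by
    rw [hg_def]
    simp only [hDc, hT14]
    have : (D:ℝ) + 1 - 2 = (D:ℝ) - 1 := by ring
    rw [this]
    have hne : ((D:ℝ) - 1) ≠ 0 := by linarith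
    field_simp
    ring
  have hgcont : ContinuousAt g c := by
    have hTc : ContinuousAt (fun z : ℝ => Tgf ((D:ℝ)*z)) c := by
      have : ContinuousAt Tgf ((D:ℝ)*c) := by rw [hDc]; exact hTcont
      exact this.comp (by fun_prop)
    apply ContinuousAt.div
    · fun_prop
    · fun_prop
    · rw [hDc, hT14]
      have : (D:ℝ) + 1 - 2 = (D:ℝ) - 1 := by ring
      rw [this]
      have h1 : (0:ℝ) < (D:ℝ) - 1 := by linarith
      positivity
  have hgt : Tendsto g (nhdsWithin c (Set.Iio c)) (nhds (1/2)) := by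
    rw [← hgc]
    exact hgcont.continuousWithinAt.tendsto
  refine hgt.congr' ?_
  have h1 : ∀ᶠ z in nhdsWithin c (Set.Iio c), z < c := eventually_mem_nhdsWithin
  have h2 : ∀ᶠ z in nhdsWithin c (Set.Iio c), 0 < z :=
    eventually_nhdsWithin_of_eventually_nhds (eventually_gt_nhds hcpos)
  filter_upwards [h1, h2] with z hzlt hzpos
  exact (ident D hD z hzpos hzlt).symm
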